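/- Let m ≥ 1, d ∈ ℕ, x : Fin m → ℝ^d, and let ς be a permutation of Fin m. For a column index j let x_{·j} ∈ ℝ^m denote the j-th coordinate column (x_{·j})_i = (x_i)_j, and let (x∘ς)_{·j} denote the permuted column with i-th entry (x_{ς(i)})_j. Assume var(x_{·j}) > 0 for every j. Then (1/m) Σ_i ‖x_i − x_{ς(i)}‖₂² = 2 Σ_j var(x_{·j}) · (1 − ρ(x_{·j}, (x∘ς)_{·j})). Equivalently, writing K for the Gram matrix K_{i,i'} = ⟨x_i, x_{i'}⟩ and M_ς for the permutation matrix of ς, (1/m) · trace((I_m − M_ς)ᵀ (I_m − M_ς) K) equals the same quantity. -/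

import Mathlib

open Matrix

/-- Empirical mean of a vector of `m` reals. -/
noncomputable def emean (m : ℕ) (a : Fin m → ℝ) : ℝ := (1 / (m : ℝ)) * ∑ i, a i

/-- Empirical covariance of two vectors of `m` reals. -/
noncomputable def ecov (m : ℕ) (a b : Fin m → ℝ) : ℝ :=
  (1 / (m : ℝ)) * ∑ i, a i * b i - emean m a * emean m b

/-- Empirical variance. -/
noncomputable def evar (m : ℕ) (a : Fin m → ℝ) : ℝ := ecov m a a

/-- Pearson correlation. -/
noncomputable def ecorr (m : ℕ) (a b : Fin m → ℝ) : ℝ :=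
  ecov m a b / Real.sqrt (evar m a * evar m b)

/-- The `m × m` permutation matrix of a permutation `σ` of `Fin m`:
entry `(i, j)` is `1` iff `j = σ i`. -/
noncomputable def permMat (m : ℕ) (σ : Equiv.Perm (Fin m)) : Matrix (Fin m) (Fin m) ℝ :=
  Matrix.of fun i j => if σ i = j then 1 else 0

lemma col_key (m : ℕ) (a : Fin m → ℝ) (ς : Equiv.Perm (Fin m))
    (ha : 0 < evar m a) :
    (1/(m:ℝ)) * ∑ i, (a i - a (ς i))^2
      = 2 * (evar m a * (1 - ecorr m a (fun i => a (ς i)))) := by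
  have hsum : ∑ i, a (ς i) = ∑ i, a i := Equiv.sum_comp ς a
  have hsq : ∑ i, a (ς i) * a (ς i) = ∑ i, a i * a i :=
    Equiv.sum_comp ς (fun i => a i * a i)
  have hvb : evar m (fun i => a (ς i)) = evar m a := by
    simp only [evar, ecov, emean, hsum, hsq]
  have hcorr : ecorr m a (fun i => a (ς i)) = ecov m a (fun i => a (ς i)) / evar m a := by
    rw [ecorr, hvb, Real.sqrt_mul_self ha.le]
  rw [hcorr]
  have hane : evar m a ≠ 0 := ha.ne'
  have h2 : evar m a * (1 - ecov m a (fun i => a (ς i)) / evar m a)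
      = evar m a - ecov m a (fun i => a (ς i)) := by
    field_simp
  rw [h2]
  simp only [evar, ecov, emean, hsum]
  have hexp : ∑ i, (a i - a (ς i))^2
      = ∑ i, a i * a i - 2 * ∑ i, a i * a (ς i) + ∑ i, a (ς i) * a (ς i) := by
    rw [show (∑ i, (a i - a (ς i))^2)
        = ∑ i, (a i * a i - 2*(a i * a (ς i)) + a (ς i) * a (ς i))
      from Finset.sum_congr rfl (fun i _ => by ring)]
    rw [Finset.sum_add_distrib, Finset.sum_sub_distrib, ← Finset.mul_sum]
  rw [hexp, hsq]
  ring

lemma triple_swap {M : Type*} [AddCommMonoid M] {m : ℕ} (f : Fin m → Fin m → Fin m → M) :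
    ∑ i, ∑ k, ∑ l, f i k l = ∑ l, ∑ i, ∑ k, f i k l := by
  rw [show (∑ i, ∑ k, ∑ l, f i k l) = ∑ i, ∑ l, ∑ k, f i k l from
    Finset.sum_congr rfl (fun i _ => Finset.sum_comm), Finset.sum_comm]

lemma trace_eq (m d : ℕ) (x : Fin m → EuclideanSpace ℝ (Fin d)) (ς : Equiv.Perm (Fin m)) :
    Matrix.trace ((1 - permMat m ς)ᵀ * (1 - permMat m ς) *
      Matrix.of (fun i i' => (inner ℝ (x i) (x i') : ℝ)))
    = ∑ i, ‖x i - x (ς i)‖^2 := by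
  set A := (1 : Matrix (Fin m) (Fin m) ℝ) - permMat m ς with hA
  have hrow : ∀ l, x l - x (ς l) = ∑ i, (A l i) • x i := by
    intro l
    simp only [hA, Matrix.sub_apply, Matrix.one_apply, permMat, Matrix.of_apply, sub_smul]
    rw [Finset.sum_sub_distrib]
    simp [ite_smul, Finset.sum_ite_eq]
  have hR : ∑ l, ‖x l - x (ς l)‖^2
      = ∑ l, ∑ i, ∑ k, A l i * A l k * (inner ℝ (x i) (x k) : ℝ) := by
    refine Finset.sum_congr rfl (fun l _ => ?_)
    rw [← real_inner_self_eq_norm_sq, hrow l, sum_inner]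
    refine Finset.sum_congr rfl (fun i _ => ?_)
    rw [inner_sum]
    refine Finset.sum_congr rfl (fun k _ => ?_)
    rw [real_inner_smul_left, real_inner_smul_right]
    ring
  rw [hR]
  simp only [Matrix.trace, Matrix.diag, Matrix.mul_apply, Matrix.transpose_apply,
    Matrix.of_apply, Finset.sum_mul]
  rw [triple_swap (fun i k l => A l i * A l k * (inner ℝ (x k) (x i) : ℝ))]
  refine Finset.sum_congr rfl (fun l _ => Finset.sum_congr rfl (fun i _ =>
    Finset.sum_congr rfl (fun k _ => ?_)))
  rw [real_inner_comm]

/-- identity `(simplinn)` accompanying Theorem 3. For a permutation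
Crossover Process, `(1/m) ∑ᵢ ‖xᵢ - x_{ς(i)}‖²` equals
`2 ∑ⱼ var(x_{·j}) (1 - ρ(x_{·j}, (x∘ς)_{·j}))`, and the same quantity equals
`(1/m) trace((I - M_ς)ᵀ (I - M_ς) K)` for the Gram matrix `K`. -/
theorem stmt6 (m d : ℕ) (hm : 1 ≤ m) (x : Fin m → EuclideanSpace ℝ (Fin d))
    (ς : Equiv.Perm (Fin m))
    (hvar : ∀ j, 0 < evar m (fun i => x i j)) :
    ((1 / (m : ℝ)) * ∑ i, ‖x i - x (ς i)‖ ^ 2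
      = 2 * ∑ j, evar m (fun i => x i j) *
          (1 - ecorr m (fun i => x i j) (fun i => x (ς i) j))) ∧
    ((1 / (m : ℝ)) * Matrix.trace
        ((1 - permMat m ς)ᵀ * (1 - permMat m ς) *
          Matrix.of (fun i i' => (inner ℝ (x i) (x i') : ℝ)))
      = 2 * ∑ j, evar m (fun i => x i j) *
          (1 - ecorr m (fun i => x i j) (fun i => x (ς i) j))) := by
  have hnorm : ∀ i, ‖x i - x (ς i)‖^2 = ∑ j, (x i j - x (ς i) j)^2 := by
    intro i
    rw [← real_inner_self_eq_norm_sq, PiLp.inner_apply]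
    simp [RCLike.inner_apply, PiLp.sub_apply, sq]
  have h1 : (1 / (m : ℝ)) * ∑ i, ‖x i - x (ς i)‖ ^ 2
      = 2 * ∑ j, evar m (fun i => x i j) *
          (1 - ecorr m (fun i => x i j) (fun i => x (ς i) j)) := by
    calc (1 / (m : ℝ)) * ∑ i, ‖x i - x (ς i)‖ ^ 2
        = (1 / (m : ℝ)) * ∑ j, ∑ i, (x i j - x (ς i) j)^2 := by
          rw [show (∑ i, ‖x i - x (ς i)‖ ^ 2) = ∑ i, ∑ j, (x i j - x (ς i) j)^2 from
            Finset.sum_congr rfl (fun i _ => hnorm i), Finset.sum_comm]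
      _ = ∑ j, (1 / (m : ℝ)) * ∑ i, (x i j - x (ς i) j)^2 := by
          rw [Finset.mul_sum]
      _ = ∑ j, 2 * (evar m (fun i => x i j) *
            (1 - ecorr m (fun i => x i j) (fun i => x (ς i) j))) := by
          exact Finset.sum_congr rfl (fun j _ => col_key m (fun i => x i j) ς (hvar j))
      _ = 2 * ∑ j, evar m (fun i => x i j) *
            (1 - ecorr m (fun i => x i j) (fun i => x (ς i) j)) := by
          rw [Finset.mul_sum]
  refine ⟨h1, ?_⟩
  rw [trace_eq m d x ς]
  exact h1
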